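/- Let K ≥ 1, let A be a unital star ring, and let z_1,…,z_N ∈ A satisfy the sphere relations Σ_{i=1}^N z_i z_i* = 1 = Σ_{i=1}^N z_i* z_i together with the K-commutation relations: for all (i_1,…,i_K), (j_1,…,j_K) ∈ {1,…,N}^K, z_{i_1}⋯z_{i_K} commutes with z_{j_1}⋯z_{j_K} and with z_{j_1}*⋯z_{j_K}*. Then for all indices i_1,…,i_K: Σ_{i=1}^N z_i (z_{i_1}⋯z_{i_K}) z_i* = z_{i_K} z_{i_1}⋯z_{i_{K−1}}, and Σ_{i=1}^N z_i (z_{i_K}*⋯z_{i_1}*) z_i* = z_{i_{K−1}}*⋯z_{i_1}* z_{i_K}*. -/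

import Mathlib

lemma starProd_aux {A : Type*} [Ring A] [StarRing A] {N : ℕ} (z : Fin N → A)
    (l : List (Fin N)) :
    star ((l.map z).prod) = (l.reverse.map fun j => star (z j)).prod := by
  induction l with
  | nil => simp
  | cons a l ih => simp [star_mul, ih]

lemma wordSum_aux {A : Type*} [Ring A] [StarRing A] {N : ℕ} (z : Fin N → A)
    (h1 : ∑ i, z i * star (z i) = 1) (n : ℕ) :
    ∑ w : Fin n → Fin N,
      ((List.ofFn w).map z).prod * star (((List.ofFn w).map z).prod) = 1 := by
  induction n with
  | zero => simp
  | succ n ih =>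
    rw [← Equiv.sum_comp (Fin.consEquiv (fun _ : Fin (n+1) => Fin N)), Fintype.sum_prod_type]
    have : ∀ (t : Fin N) (w : Fin n → Fin N),
        ((List.ofFn ((Fin.consEquiv (fun _ : Fin (n+1) => Fin N)) (t, w))).map z).prod
          * star (((List.ofFn ((Fin.consEquiv (fun _ : Fin (n+1) => Fin N)) (t, w))).map z).prod)
        = z t * (((List.ofFn w).map z).prod * star (((List.ofFn w).map z).prod)) * star (z t) := by
      intro t w
      simp [Fin.consEquiv, List.ofFn_succ, star_mul, mul_assoc]
    simp only [this]
    calc ∑ t : Fin N, ∑ w : Fin n → Fin N,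
          z t * (((List.ofFn w).map z).prod * star (((List.ofFn w).map z).prod)) * star (z t)
        = ∑ t : Fin N, z t * (∑ w : Fin n → Fin N,
            ((List.ofFn w).map z).prod * star (((List.ofFn w).map z).prod)) * star (z t) := by
          congr 1; ext t; rw [Finset.mul_sum, Finset.sum_mul]
      _ = 1 := by rw [ih]; simpa using h1

/-- In a unital star ring, if `z₁,…,z_N` satisfy the sphere relations and
the `K`-commutation relations, then for all indices `i₁,…,i_K` (encoded as a list `l`
of length `K-1` followed by a last index `a`):
`Σ_t z_t (z_{i₁}⋯z_{i_K}) z_t* = z_{i_K} z_{i₁}⋯z_{i_{K-1}}` and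
`Σ_t z_t (z_{i_K}*⋯z_{i₁}*) z_t* = z_{i_{K-1}}*⋯z_{i₁}* z_{i_K}*`. -/
theorem stmt_10 {A : Type*} [Ring A] [StarRing A] {N : ℕ} (K : ℕ) (hK : 1 ≤ K)
    (z : Fin N → A)
    (h1 : ∑ i, z i * star (z i) = 1)
    (h2 : ∑ i, star (z i) * z i = 1)
    (hcomm : ∀ l m : List (Fin N), l.length = K → m.length = K →
      Commute ((l.map z).prod) ((m.map z).prod) ∧
      Commute ((l.map z).prod) ((m.map fun j => star (z j)).prod)) :
    ∀ (l : List (Fin N)) (a : Fin N), l.length + 1 = K →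
      (∑ t, z t * ((l.map z).prod * z a) * star (z t) = z a * (l.map z).prod) ∧
      (∑ t, z t * (star (z a) * star ((l.map z).prod)) * star (z t)
          = star ((l.map z).prod) * star (z a)) := by
  intro l a hl
  set n := l.length with hn
  set P : A := (l.map z).prod with hP
  set W : (Fin n → Fin N) → A := fun w => ((List.ofFn w).map z).prod with hW
  have main : ∑ t, z t * (P * z a) * star (z t) = z a * P := by
    have key : ∀ t : Fin N, z t * (P * z a) * star (z t)
        = ∑ w : Fin n → Fin N, z a * (W w * star (W w)) * ((star (z t) * z t) * P) := by
      intro t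
      have step1 : z t * (P * z a) * star (z t)
          = ∑ w : Fin n → Fin N, z t * (P * z a) * (W w * star (W w)) * star (z t) := by
        rw [← Finset.sum_mul, ← Finset.mul_sum, wordSum_aux z h1 n, mul_one]
      rw [step1]
      refine Finset.sum_congr rfl fun w _ => ?_
      have c1 := (hcomm (t :: l) (a :: List.ofFn w) (by simp; exact hl) (by simp [hl])).1
      have c2 := (hcomm (t :: l) ((List.ofFn w).reverse ++ [t]) (by simp; exact hl) (by simp [hl])).2
      simp only [List.map_cons, List.prod_cons, List.map_append, List.prod_append,
        List.map_reverse] at c1 c2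
      have c2' : Commute (z t * P) (star (W w) * star (z t)) := by
        have hrev : (List.ofFn ((fun j => star (z j)) ∘ w)).reverse.prod = star (W w) := by
          rw [hW, starProd_aux]
          simp [List.map_reverse, List.map_ofFn]
        simpa [hrev] using c2
      have e1 : (z t * P) * (z a * W w) = (z a * W w) * (z t * P) := c1.eq
      have e2 : (z t * P) * (star (W w) * star (z t))
          = (star (W w) * star (z t)) * (z t * P) := c2'.eq
      calc z t * (P * z a) * (W w * star (W w)) * star (z t)
          = (z t * P) * ((z a * W w) * (star (W w) * star (z t))) := by
            simp only [mul_assoc]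
        _ = ((z t * P) * (z a * W w)) * (star (W w) * star (z t)) := by
            simp only [mul_assoc]
        _ = ((z a * W w) * (z t * P)) * (star (W w) * star (z t)) := by rw [e1]
        _ = (z a * W w) * ((z t * P) * (star (W w) * star (z t))) := by
            simp only [mul_assoc]
        _ = (z a * W w) * ((star (W w) * star (z t)) * (z t * P)) := by rw [e2]
        _ = z a * (W w * star (W w)) * ((star (z t) * z t) * P) := by
            simp only [mul_assoc]
    calc ∑ t, z t * (P * z a) * star (z t)
        = ∑ t, ∑ w : Fin n → Fin N, z a * (W w * star (W w)) * ((star (z t) * z t) * P) := by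
          exact Finset.sum_congr rfl fun t _ => key t
      _ = ∑ w : Fin n → Fin N, ∑ t, z a * (W w * star (W w)) * ((star (z t) * z t) * P) := by
          rw [Finset.sum_comm]
      _ = ∑ w : Fin n → Fin N, z a * (W w * star (W w)) * ((∑ t, star (z t) * z t) * P) := by
          refine Finset.sum_congr rfl fun w _ => ?_
          rw [← Finset.mul_sum, ← Finset.sum_mul]
      _ = ∑ w : Fin n → Fin N, z a * (W w * star (W w)) * P := by rw [h2, one_mul]
      _ = z a * (∑ w : Fin n → Fin N, W w * star (W w)) * P := by
          rw [← Finset.sum_mul, ← Finset.mul_sum]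
      _ = z a * P := by rw [wordSum_aux z h1 n, mul_one]
  refine ⟨main, ?_⟩
  have := congrArg star main
  simpa [star_sum, star_mul, star_star, mul_assoc] using this
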